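/- Define $S(n,d) = \sum_{i=0}^{n-1} \frac{1}{1 - \binom{i}{d}/\binom{n}{d}}$ and $H_n = \sum_{k=1}^{n} \frac{1}{k}$ as real numbers. For all natural numbers $n, d$ with $1 \leq d \leq n$, $$S(n,d) \;\leq\; \frac{n\, H_n}{d} + n\left(1 - \frac{1}{d}\right).$$ -/

import Mathlib

lemma descFact_le (d i n : ℕ) (h : i ≤ n) :
    n ^ d * i.descFactorial d ≤ i ^ d * n.descFactorial d := by
  induction d with
  | zero => simp
  | succ d ih =>
    have h1 : i * (n - d) ≥ n * (i - d) := by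
      rcases le_or_gt i d with hid | hid
      · simp [Nat.sub_eq_zero_of_le hid]
      · have hdn : d ≤ n := le_of_lt (lt_of_lt_of_le hid h)
        zify [le_of_lt hid, hdn]
        nlinarith
    rw [Nat.descFactorial_succ, Nat.descFactorial_succ, pow_succ, pow_succ]
    calc n ^ d * n * ((i - d) * i.descFactorial d)
        = (n * (i - d)) * (n ^ d * i.descFactorial d) := by ring
      _ ≤ (i * (n - d)) * (i ^ d * n.descFactorial d) := Nat.mul_le_mul h1 ih
      _ = i ^ d * i * ((n - d) * n.descFactorial d) := by ring

lemma choose_ratio_le (d i n : ℕ) (h : i ≤ n) :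
    n ^ d * i.choose d ≤ i ^ d * n.choose d := by
  have := descFact_le d i n h
  rw [Nat.descFactorial_eq_factorial_mul_choose, Nat.descFactorial_eq_factorial_mul_choose] at this
  have hf : 0 < d.factorial := Nat.factorial_pos d
  calc n ^ d * i.choose d = (d.factorial * (n ^ d * i.choose d)) / d.factorial := by
        rw [Nat.mul_div_cancel_left _ hf]
    _ ≤ (d.factorial * (i ^ d * n.choose d)) / d.factorial := by
        apply Nat.div_le_div_right
        calc d.factorial * (n ^ d * i.choose d) = n ^ d * (d.factorial * i.choose d) := by ring
          _ ≤ i ^ d * (d.factorial * n.choose d) := this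
          _ = d.factorial * (i ^ d * n.choose d) := by ring
    _ = i ^ d * n.choose d := Nat.mul_div_cancel_left _ hf

lemma ratio_le_pow (d i n : ℕ) (hd : 1 ≤ d) (hdn : d ≤ n) (hi : i < n) :
    (i.choose d : ℝ) / (n.choose d : ℝ) ≤ ((i : ℝ) / n) ^ d := by
  have hn : (0:ℝ) < n := by exact_mod_cast hd.trans hdn
  have hc : (0:ℝ) < n.choose d := by exact_mod_cast Nat.choose_pos hdn
  rw [div_pow, div_le_div_iff₀ hc (by positivity)]
  have h2 : ((n ^ d * i.choose d : ℕ) : ℝ) ≤ ((i ^ d * n.choose d : ℕ) : ℝ) := by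
    exact_mod_cast choose_ratio_le d i n hi.le
  push_cast at h2
  linarith

lemma term_bound (d i n : ℕ) (hd : 1 ≤ d) (hdn : d ≤ n) (hi : i < n) :
    1 / (1 - (i.choose d : ℝ) / (n.choose d : ℝ)) ≤
      1 + (i : ℝ) / ((d : ℝ) * ((n - i : ℕ) : ℝ)) := by
  have hn : (0:ℝ) < n := by exact_mod_cast hd.trans hdn
  set x : ℝ := (i : ℝ) / n with hx
  have hx0 : 0 ≤ x := by positivity
  have hx1 : x < 1 := by
    rw [hx, div_lt_one hn]; exact_mod_cast hi
  have hxd : x ^ d < 1 := pow_lt_one₀ hx0 hx1 (by omega)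
  have hr0 : (0:ℝ) ≤ (i.choose d : ℝ) / (n.choose d : ℝ) := by positivity
  have hr : (i.choose d : ℝ) / (n.choose d : ℝ) ≤ x ^ d := ratio_le_pow d i n hd hdn hi
  have h1 : 1 / (1 - (i.choose d : ℝ) / (n.choose d : ℝ)) ≤ 1 / (1 - x ^ d) := by
    apply one_div_le_one_div_of_le (by linarith)
    linarith
  have hdr : (0:ℝ) < d := by exact_mod_cast hd
  have hni : (0:ℝ) < ((n - i : ℕ) : ℝ) := by
    have : 0 < n - i := by omega
    exact_mod_cast this
  have hcast : ((n - i : ℕ) : ℝ) = (n:ℝ) - i := by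
    exact_mod_cast Nat.cast_sub hi.le
  have hxeq : x / ((d:ℝ) * (1 - x)) = (i : ℝ) / ((d : ℝ) * ((n - i : ℕ) : ℝ)) := by
    have hne : (n:ℝ) ≠ 0 := ne_of_gt hn
    have hni' : ((n:ℝ) - i) ≠ 0 := by rw [← hcast]; exact ne_of_gt hni
    have hdne : (d:ℝ) ≠ 0 := ne_of_gt hdr
    have h1x : (1:ℝ) - (i:ℝ)/n ≠ 0 := by
      have : (i:ℝ)/n < 1 := by rw [hx] at hx1; exact hx1
      intro hc; rw [sub_eq_zero] at hc; rw [← hc] at this; exact lt_irrefl _ this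
    rw [hcast, hx]
    field_simp
  rw [← hxeq]
  refine h1.trans ?_
  rcases Nat.eq_zero_or_pos i with rfl | hip
  · have : x = 0 := by simp [hx]
    rw [this, zero_pow (by omega), zero_div]
    norm_num
  have hxp : 0 < x := by
    rw [hx]; positivity
  have hgeom : (1 - x) * ((d:ℝ) * x ^ (d-1)) ≤ 1 - x ^ d := by
    have hsum : (d:ℝ) * x ^ (d-1) ≤ ∑ j ∈ Finset.range d, x ^ j := by
      have : ∀ j ∈ Finset.range d, x ^ (d-1) ≤ x ^ j := by
        intro j hj
        exact pow_le_pow_of_le_one hx0 hx1.le (by simp at hj; omega)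
      calc (d:ℝ) * x ^ (d-1) = ∑ _j ∈ Finset.range d, x ^ (d-1) := by
            simp [Finset.sum_const, mul_comm]
        _ ≤ _ := Finset.sum_le_sum this
    have hmul : (1 - x) * ∑ j ∈ Finset.range d, x ^ j = 1 - x ^ d := by
      have := geom_sum_mul x d
      nlinarith [this]
    nlinarith [hsum, sub_pos.mpr hx1]
  have hpos2 : (0:ℝ) < (1 - x) * ((d:ℝ) * x ^ (d-1)) := by
    have : (0:ℝ) < 1 - x := by linarith
    positivity
  have key : x ^ d / (1 - x ^ d) ≤ x / ((d:ℝ) * (1 - x)) := by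
    rw [div_le_div_iff₀ (by linarith) (by nlinarith)]
    have hxd' : x ^ d = x ^ (d-1) * x := by
      rw [← pow_succ]; congr 1; omega
    calc x ^ d * ((d:ℝ) * (1 - x)) = x * ((1 - x) * ((d:ℝ) * x ^ (d-1))) := by
          rw [hxd']; ring
      _ ≤ x * (1 - x ^ d) := mul_le_mul_of_nonneg_left hgeom hxp.le
  have heq : 1 / (1 - x ^ d) = 1 + x ^ d / (1 - x ^ d) := by
    have h0 : (1:ℝ) - x ^ d ≠ 0 := ne_of_gt (by linarith)
    field_simp
    ring
  rw [heq]
  linarith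

noncomputable def S (n d : ℕ) : ℝ :=
  ∑ i ∈ Finset.range n, 1 / (1 - (i.choose d : ℝ) / (n.choose d : ℝ))

noncomputable def H (n : ℕ) : ℝ := ∑ k ∈ Finset.Icc 1 n, 1 / (k : ℝ)

lemma sum_inv_reflect (n : ℕ) :
    ∑ i ∈ Finset.range n, 1 / (((n - i : ℕ)) : ℝ) = H n := by
  have h := Finset.sum_range_reflect (fun j => 1 / (((n - j : ℕ)) : ℝ)) n
  have h2 : ∑ j ∈ Finset.range n, 1 / (((n - (n - 1 - j) : ℕ)) : ℝ)
      = ∑ j ∈ Finset.range n, 1 / (((j + 1 : ℕ)) : ℝ) := by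
    apply Finset.sum_congr rfl
    intro j hj
    have : n - (n - 1 - j) = j + 1 := by
      have := Finset.mem_range.mp hj; omega
    rw [this]
  rw [h2] at h
  rw [← h, H, ← Finset.Ico_add_one_right_eq_Icc, Finset.sum_Ico_eq_sum_range]
  simp [add_comm]

theorem S_upper_bound (n d : ℕ) (hd : 1 ≤ d) (hdn : d ≤ n) :
    S n d ≤ (n : ℝ) * H n / d + (n : ℝ) * (1 - 1 / (d : ℝ)) := by
  have hdr : (0:ℝ) < d := by exact_mod_cast hd
  have key : S n d ≤ ∑ i ∈ Finset.range n, (1 + (i:ℝ)/((d:ℝ)*((n-i:ℕ):ℝ))) :=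
    Finset.sum_le_sum fun i hi => term_bound d i n hd hdn (Finset.mem_range.mp hi)
  refine key.trans ?_
  have hsum : ∑ i ∈ Finset.range n, (1 + (i:ℝ)/((d:ℝ)*((n-i:ℕ):ℝ)))
      = (n:ℝ) + (1/d) * ((n:ℝ) * H n - n) := by
    rw [Finset.sum_add_distrib, Finset.sum_const, Finset.card_range]
    have h1 : ∀ i ∈ Finset.range n, (i:ℝ)/((d:ℝ)*((n-i:ℕ):ℝ))
        = (1/d) * ((n:ℝ) * (1/((n-i:ℕ):ℝ))) - 1/d := by
      intro i hi
      have hi' := Finset.mem_range.mp hi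
      have hni : (0:ℝ) < ((n - i : ℕ) : ℝ) := by
        have : 0 < n - i := by omega
        exact_mod_cast this
      have hcast : ((n - i : ℕ) : ℝ) = (n:ℝ) - i := by
        exact_mod_cast Nat.cast_sub hi'.le
      field_simp
      rw [hcast]
      ring
    rw [Finset.sum_congr rfl h1, Finset.sum_sub_distrib, Finset.sum_const, Finset.card_range,
      ← Finset.mul_sum, ← Finset.mul_sum, sum_inv_reflect]
    push_cast
    ring
  have heq : (n:ℝ) + (1/d) * ((n:ℝ) * H n - n)
      = (n:ℝ) * H n / d + (n:ℝ) * (1 - 1/(d:ℝ)) := by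
    field_simp
    ring
  rw [hsum, heq]
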